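/- Conditioning on all type-2 choices in T increases the probability of B∩C: fix 0<μ<1, n ≥ 2, 2 ≤ K_n < n, and integers ℓ ≥ 0 and r with 2 ≤ r ≤ n−ℓ−1. In H(n;μ,K_n), with U = {v_1,…,v_ℓ} and T = {v_{ℓ+1},…,v_{ℓ+r}}, let B be the event that every node of U is adjacent to some node of T, C the event that the induced subgraph on T is connected, and X_2 the event that every node in T has type 2. Then P[B ∩ C] ≤ P[B ∩ C | X_2]. -/

import Mathlib

open Finset Filter Asymptotics

namespace KOut

/-- A configuration: for each node, its type (`true` = type-1, `false` = type-2)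
and the set of nodes it selects. -/
abbrev Config (n : ℕ) := (Fin n → Bool) × (Fin n → Finset (Fin n))

/-- Probability density of a configuration in the inhomogeneous random K-out graph
model `H(n; μ, K)`: each node is independently type-1 with probability `μ` (type-2 with
probability `1-μ`), and, given its type, its selection set is uniform among the subsets
of the other `n-1` nodes of size `1` (type-1) resp. `K` (type-2). -/
noncomputable def density (n : ℕ) (μ : ℝ) (K : ℕ) (ω : Config n) : ℝ :=
  ∏ i : Fin n,
    ((if ω.1 i then μ else 1 - μ) *
      (if i ∉ ω.2 i ∧ (ω.2 i).card = (if ω.1 i then 1 else K)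
       then ((n - 1).choose (if ω.1 i then 1 else K) : ℝ)⁻¹ else 0))

/-- Probability of an event in `H(n; μ, K)`. -/
noncomputable def prob (n : ℕ) (μ : ℝ) (K : ℕ) (E : Set (Config n)) : ℝ :=
  ∑ ω : Config n, Set.indicator E (density n μ K) ω

/-- The (undirected) graph associated with a configuration: an edge joins two distinct
nodes iff at least one of them selects the other. -/
def graph {n : ℕ} (ω : Config n) : SimpleGraph (Fin n) where
  Adj i j := i ≠ j ∧ (j ∈ ω.2 i ∨ i ∈ ω.2 j)
  symm := ⟨fun _ _ h => ⟨h.1.symm, h.2.symm⟩⟩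
  loopless := ⟨fun _ h => h.1 rfl⟩

instance {n : ℕ} (ω : Config n) : DecidableRel (graph ω).Adj :=
  fun i j => inferInstanceAs (Decidable (i ≠ j ∧ (j ∈ ω.2 i ∨ i ∈ ω.2 j)))

/-- The mean number of selections `⟨K_n⟩ = μ + (1-μ) K_n`. -/
noncomputable def avgK (μ : ℝ) (K : ℕ) : ℝ := μ + (1 - μ) * K

/-- Conditional expectation of `X` given the event `A` in `H(n;μ,K)`. -/
noncomputable def expCond (n : ℕ) (μ : ℝ) (K : ℕ) (A : Set (Config n))
    (X : Config n → ℝ) : ℝ :=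
  (∑ ω : Config n, Set.indicator A (fun ω => X ω * density n μ K ω) ω) / prob n μ K A

/-- Conditional probability of `E` given the event `A` in `H(n;μ,K)`. -/
noncomputable def cprob (n : ℕ) (μ : ℝ) (K : ℕ) (E A : Set (Config n)) : ℝ :=
  prob n μ K (E ∩ A) / prob n μ K A

/-- `B`: the event that every node of `U = {v_1,…,v_ℓ}` is adjacent to some node of
`T = {v_{ℓ+1},…,v_{ℓ+r}}`. -/
def eventB (n ℓ r : ℕ) : Set (Config n) :=
  {ω | ∀ i : Fin n, (i : ℕ) < ℓ →
    ∃ j : Fin n, ℓ ≤ (j : ℕ) ∧ (j : ℕ) < ℓ + r ∧ (graph ω).Adj i j}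

/-- `C`: the event that the subgraph induced on `T = {v_{ℓ+1},…,v_{ℓ+r}}` is
connected. -/
def eventC (n ℓ r : ℕ) : Set (Config n) :=
  {ω | ((graph ω).induce {v : Fin n | ℓ ≤ (v : ℕ) ∧ (v : ℕ) < ℓ + r}).Connected}

/-- `X_t`: the event that every node in `T = {v_{ℓ+1},…,v_{ℓ+r}}` has type `t`
(`true` = type-1, `false` = type-2). -/
def eventX (n ℓ r : ℕ) (t : Bool) : Set (Config n) :=
  {ω | ∀ j : Fin n, ℓ ≤ (j : ℕ) → (j : ℕ) < ℓ + r → ω.1 j = t}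

/-- The value `K_t`, with `K_1 = 1` (type-1, `t = true`) and `K_2 = K` (type-2,
`t = false`). -/
def Ktype (K : ℕ) (t : Bool) : ℕ := if t then 1 else K



noncomputable def uwt (n k : ℕ) (j : Fin n) (S : Finset (Fin n)) : ℝ :=
  if j ∉ S ∧ S.card = k then ((n - 1).choose k : ℝ)⁻¹ else 0

lemma uwt_nonneg (n k : ℕ) (j : Fin n) (S : Finset (Fin n)) : 0 ≤ uwt n k j S := by
  unfold uwt; split <;> positivity

lemma filter_eq_powersetCard (n k : ℕ) (j : Fin n) :
    (univ : Finset (Finset (Fin n))).filter (fun S => j ∉ S ∧ S.card = k) =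
      Finset.powersetCard k ((univ : Finset (Fin n)).erase j) := by
  ext S
  simp only [mem_filter, mem_univ, true_and, Finset.mem_powersetCard, Finset.subset_erase,
    subset_univ, true_and]

lemma card_erase_univ (n : ℕ) (j : Fin n) :
    ((univ : Finset (Fin n)).erase j).card = n - 1 := by
  rw [Finset.card_erase_of_mem (mem_univ j), Finset.card_univ, Fintype.card_fin]

lemma sum_uwt_mul (n k : ℕ) (j : Fin n) (g : Finset (Fin n) → ℝ) :
    ∑ S : Finset (Fin n), uwt n k j S * g S =
      ((n - 1).choose k : ℝ)⁻¹ *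
        ∑ S ∈ Finset.powersetCard k ((univ : Finset (Fin n)).erase j), g S := by
  have h1 : ∀ S : Finset (Fin n), uwt n k j S * g S =
      if j ∉ S ∧ S.card = k then ((n - 1).choose k : ℝ)⁻¹ * g S else 0 := by
    intro S; unfold uwt; split <;> simp
  rw [Finset.sum_congr rfl (fun S _ => h1 S), Finset.sum_ite, Finset.sum_const_zero, add_zero,
    filter_eq_powersetCard n k j, Finset.mul_sum]

lemma sum_uwt (n k : ℕ) (j : Fin n) (hk : k ≤ n - 1) :
    ∑ S : Finset (Fin n), uwt n k j S = 1 := by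
  have h := sum_uwt_mul n k j (fun _ => 1)
  simp only [mul_one] at h
  rw [h, Finset.sum_const, Finset.card_powersetCard, card_erase_univ, nsmul_eq_mul, mul_one]
  rw [inv_mul_cancel₀]
  exact_mod_cast (Nat.choose_pos hk).ne'


lemma card_filter_mem_powersetCard (n K : ℕ) (j x : Fin n) (hx : x ∈ (univ : Finset (Fin n)).erase j)
    (hK : 1 ≤ K) :
    ((Finset.powersetCard K ((univ : Finset (Fin n)).erase j)).filter (fun S => x ∈ S)).card =
      (n - 2).choose (K - 1) := by
  set E := (univ : Finset (Fin n)).erase j with hE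
  have hcard : (E.erase x).card = n - 2 := by
    rw [Finset.card_erase_of_mem hx, card_erase_univ]; omega
  rw [← hcard, ← Finset.card_powersetCard]
  refine Finset.card_bij' (fun S _ => S.erase x) (fun t _ => insert x t) ?hi ?hj ?li ?ri
  case hi =>
    intro S hS
    rw [Finset.mem_filter, Finset.mem_powersetCard] at hS
    rw [Finset.mem_powersetCard]
    exact ⟨Finset.erase_subset_erase x hS.1.1,
      by rw [Finset.card_erase_of_mem hS.2, hS.1.2]⟩
  case hj =>
    intro t ht
    rw [Finset.mem_powersetCard] at ht
    have hxt : x ∉ t := fun hc => (Finset.notMem_erase x E) (ht.1 hc)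
    rw [Finset.mem_filter, Finset.mem_powersetCard]
    refine ⟨⟨Finset.insert_subset hx (ht.1.trans (Finset.erase_subset x E)), ?_⟩,
      Finset.mem_insert_self x t⟩
    rw [Finset.card_insert_of_notMem hxt, ht.2]; omega
  case li =>
    intro S hS
    rw [Finset.mem_filter] at hS
    exact Finset.insert_erase hS.2
  case ri =>
    intro t ht
    rw [Finset.mem_powersetCard] at ht
    exact Finset.erase_insert (fun hc => (Finset.notMem_erase x E) (ht.1 hc))

lemma key_sum_le (n K : ℕ) (hn : 2 ≤ n) (hK1 : 1 ≤ K) (hKn : K ≤ n - 1) (j : Fin n)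
    (g : Finset (Fin n) → ℝ) (hg0 : ∀ S, 0 ≤ g S)
    (hgm : ∀ ⦃S S'⦄, S ⊆ S' → g S ≤ g S') :
    ∑ S : Finset (Fin n), uwt n 1 j S * g S ≤ ∑ S : Finset (Fin n), uwt n K j S * g S := by
  set E := (univ : Finset (Fin n)).erase j with hE
  have hEcard : E.card = n - 1 := card_erase_univ n j
  rw [sum_uwt_mul, sum_uwt_mul]
  set A := ∑ S ∈ Finset.powersetCard 1 E, g S with hA
  set B := ∑ S ∈ Finset.powersetCard K E, g S with hB
  have hA' : A = ∑ x ∈ E, g {x} := by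
    rw [hA, Finset.powersetCard_one, Finset.sum_map]; rfl
  -- double counting
  have claim : ((n - 2).choose (K - 1) : ℝ) * A ≤ (K : ℝ) * B := by
    have step1 : ∑ S ∈ Finset.powersetCard K E, ∑ x ∈ S, g {x}
        ≤ ∑ S ∈ Finset.powersetCard K E, ∑ x ∈ S, g S := by
      refine Finset.sum_le_sum fun S _ => Finset.sum_le_sum fun x hx => ?_
      exact hgm (Finset.singleton_subset_iff.2 hx)
    have step2 : ∑ S ∈ Finset.powersetCard K E, ∑ x ∈ S, g S = (K : ℝ) * B := by
      rw [hB, Finset.mul_sum]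
      refine Finset.sum_congr rfl fun S hS => ?_
      rw [Finset.mem_powersetCard] at hS
      rw [Finset.sum_const, hS.2, nsmul_eq_mul]
    have step3 : ∑ S ∈ Finset.powersetCard K E, ∑ x ∈ S, g {x}
        = ((n - 2).choose (K - 1) : ℝ) * A := by
      have inner : ∀ S ∈ Finset.powersetCard K E, ∑ x ∈ S, g {x}
          = ∑ x ∈ E, if x ∈ S then g {x} else 0 := by
        intro S hS
        rw [Finset.mem_powersetCard] at hS
        rw [Finset.sum_ite_mem, Finset.inter_eq_right.2 hS.1]
      rw [Finset.sum_congr rfl inner, Finset.sum_comm]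
      rw [hA']
      rw [Finset.mul_sum]
      refine Finset.sum_congr rfl fun x hx => ?_
      rw [Finset.sum_ite, Finset.sum_const_zero, add_zero, Finset.sum_const,
        card_filter_mem_powersetCard n K j x hx hK1, nsmul_eq_mul]
    calc ((n - 2).choose (K - 1) : ℝ) * A = ∑ S ∈ Finset.powersetCard K E, ∑ x ∈ S, g {x} := step3.symm
        _ ≤ ∑ S ∈ Finset.powersetCard K E, ∑ x ∈ S, g S := step1
        _ = (K : ℝ) * B := step2
  -- now conclude
  have hApos : 0 ≤ A := Finset.sum_nonneg fun S _ => hg0 S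
  have hBpos : 0 ≤ B := Finset.sum_nonneg fun S _ => hg0 S
  have hid : (n - 1) * (n - 2).choose (K - 1) = (n - 1).choose K * K := by
    obtain ⟨m, rfl⟩ : ∃ m, n = m + 2 := ⟨n - 2, by omega⟩
    obtain ⟨k, rfl⟩ : ∃ k, K = k + 1 := ⟨K - 1, by omega⟩
    simpa [Nat.succ_eq_add_one] using Nat.add_one_mul_choose_eq m k
  have hC1 : (n - 1).choose 1 = n - 1 := Nat.choose_one_right _
  rw [hC1]
  have hCpos : (0:ℝ) < ((n - 1).choose K : ℝ) := by
    exact_mod_cast Nat.choose_pos hKn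
  have hn1pos : (0:ℝ) < ((n - 1) : ℕ) := by
    have : 1 ≤ n - 1 := by omega
    exact_mod_cast this
  rw [inv_mul_eq_div, inv_mul_eq_div, div_le_div_iff₀ hn1pos hCpos]
  -- A * choose ≤ B * (n-1)
  have hKpos : (0:ℝ) < (K:ℝ) := by exact_mod_cast hK1
  rw [← mul_le_mul_iff_of_pos_right hKpos]
  calc A * ((n - 1).choose K : ℝ) * K = A * (((n - 1).choose K * K : ℕ) : ℝ) := by
        push_cast; ring
    _ = A * ((((n - 1) * (n - 2).choose (K - 1) : ℕ)) : ℝ) := by rw [← hid]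
    _ = ((n - 2).choose (K - 1) : ℝ) * A * ((n - 1 : ℕ) : ℝ) := by push_cast; ring
    _ ≤ (K : ℝ) * B * ((n - 1 : ℕ) : ℝ) := by
        apply mul_le_mul_of_nonneg_right claim (le_of_lt hn1pos)
    _ = B * ((n - 1 : ℕ) : ℝ) * K := by ring

noncomputable def pwt (μ : ℝ) (t : Bool) : ℝ := if t then μ else 1 - μ

open Classical in
/-- indicator of the event `B ∩ C` as a function of the selection sets only -/
noncomputable def gInd (n ℓ r : ℕ) (σ : Fin n → Finset (Fin n)) : ℝ :=
  if ((fun _ => false, σ) : Config n) ∈ eventB n ℓ r ∩ eventC n ℓ r then 1 else 0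

lemma gInd_nonneg (n ℓ r : ℕ) (σ : Fin n → Finset (Fin n)) : 0 ≤ gInd n ℓ r σ := by
  unfold gInd; split <;> norm_num

lemma graph_mono {n : ℕ} {ω ω' : Config n} (h : ∀ i, ω.2 i ⊆ ω'.2 i) :
    graph ω ≤ graph ω' := by
  intro i j hij
  have hij' : i ≠ j ∧ (j ∈ ω.2 i ∨ i ∈ ω.2 j) := hij
  exact (show i ≠ j ∧ (j ∈ ω'.2 i ∨ i ∈ ω'.2 j) from ⟨hij'.1, hij'.2.imp (fun hh => h i hh) (fun hh => h j hh)⟩)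

lemma mem_BC_mono {n ℓ r : ℕ} {ω ω' : Config n} (h : ∀ i, ω.2 i ⊆ ω'.2 i)
    (hm : ω ∈ eventB n ℓ r ∩ eventC n ℓ r) : ω' ∈ eventB n ℓ r ∩ eventC n ℓ r := by
  have hle : graph ω ≤ graph ω' := graph_mono h
  constructor
  · intro i hi
    obtain ⟨j, hj1, hj2, hj3⟩ := hm.1 i hi
    exact ⟨j, hj1, hj2, hle hj3⟩
  · refine SimpleGraph.Connected.mono ?_ hm.2
    intro a b hab
    exact hle hab

lemma gInd_mono {n ℓ r : ℕ} {σ σ' : Fin n → Finset (Fin n)} (h : ∀ i, σ i ⊆ σ' i) :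
    gInd n ℓ r σ ≤ gInd n ℓ r σ' := by
  unfold gInd
  by_cases hm : ((fun _ => false, σ) : Config n) ∈ eventB n ℓ r ∩ eventC n ℓ r
  · rw [if_pos hm, if_pos (mem_BC_mono h hm)]
  · rw [if_neg hm]; split <;> norm_num

/-- the partial sum defining the probability of `B ∩ C`, with the types fixed to `τ` -/
noncomputable def Gfun (n K ℓ r : ℕ) (τ : Fin n → Bool) : ℝ :=
  ∑ σ : Fin n → Finset (Fin n), gInd n ℓ r σ * ∏ i, uwt n (Ktype K (τ i)) i (σ i)

lemma Gfun_nonneg (n K ℓ r : ℕ) (τ : Fin n → Bool) : 0 ≤ Gfun n K ℓ r τ :=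
  Finset.sum_nonneg fun σ _ => mul_nonneg (gInd_nonneg n ℓ r σ)
    (Finset.prod_nonneg fun i _ => uwt_nonneg _ _ _ _)

lemma Gfun_update (n K ℓ r : ℕ) (τ : Fin n → Bool) (j : Fin n) (t : Bool) :
    Gfun n K ℓ r (Function.update τ j t) =
      ∑ S : Finset (Fin n), uwt n (Ktype K t) j S *
        ∑ ρ : {i : Fin n // i ≠ j} → Finset (Fin n),
          gInd n ℓ r ((Equiv.funSplitAt j (Finset (Fin n))).symm (S, ρ)) *
            ∏ i ∈ Finset.univ.erase j,
              uwt n (Ktype K (τ i)) i ((Equiv.funSplitAt j (Finset (Fin n))).symm (S, ρ) i) := by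
  set e := Equiv.funSplitAt j (Finset (Fin n)) with he
  have step1 : ∀ σ : Fin n → Finset (Fin n),
      (∏ i, uwt n (Ktype K (Function.update τ j t i)) i (σ i)) =
        uwt n (Ktype K t) j (σ j) *
          ∏ i ∈ Finset.univ.erase j, uwt n (Ktype K (τ i)) i (σ i) := by
    intro σ
    rw [← Finset.mul_prod_erase Finset.univ _ (Finset.mem_univ j), Function.update_self]
    congr 1
    refine Finset.prod_congr rfl fun i hi => ?_
    rw [Function.update_of_ne (Finset.mem_erase.mp hi).1]
  unfold Gfun
  rw [Finset.sum_congr rfl fun σ _ => by rw [step1 σ]]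
  rw [← Equiv.sum_comp e.symm fun σ => gInd n ℓ r σ *
    (uwt n (Ktype K t) j (σ j) * ∏ i ∈ Finset.univ.erase j, uwt n (Ktype K (τ i)) i (σ i))]
  rw [Fintype.sum_prod_type]
  refine Finset.sum_congr rfl fun S _ => ?_
  rw [Finset.mul_sum]
  refine Finset.sum_congr rfl fun ρ _ => ?_
  have hj : e.symm (S, ρ) j = S := by
    rw [he, Equiv.funSplitAt_symm_apply, dif_pos rfl]
  rw [hj]; ring

lemma Gfun_update_le (n K ℓ r : ℕ) (hn : 2 ≤ n) (hK1 : 1 ≤ K) (hKn : K ≤ n - 1)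
    (τ : Fin n → Bool) (j : Fin n) :
    Gfun n K ℓ r (Function.update τ j true) ≤ Gfun n K ℓ r (Function.update τ j false) := by
  rw [Gfun_update, Gfun_update]
  set e := Equiv.funSplitAt j (Finset (Fin n)) with he
  set hf : Finset (Fin n) → ℝ := fun S =>
    ∑ ρ : {i : Fin n // i ≠ j} → Finset (Fin n),
      gInd n ℓ r (e.symm (S, ρ)) *
        ∏ i ∈ Finset.univ.erase j, uwt n (Ktype K (τ i)) i (e.symm (S, ρ) i) with hhf
  have hf0 : ∀ S, 0 ≤ hf S := fun S =>
    Finset.sum_nonneg fun ρ _ => mul_nonneg (gInd_nonneg _ _ _ _)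
      (Finset.prod_nonneg fun i _ => uwt_nonneg _ _ _ _)
  have hfm : ∀ ⦃S S' : Finset (Fin n)⦄, S ⊆ S' → hf S ≤ hf S' := by
    intro S S' hSS
    refine Finset.sum_le_sum fun ρ _ => ?_
    have hval : ∀ i : Fin n, i ≠ j → e.symm (S, ρ) i = e.symm (S', ρ) i := by
      intro i hi
      rw [he, Equiv.funSplitAt_symm_apply, Equiv.funSplitAt_symm_apply, dif_neg hi, dif_neg hi]
    have hsub : ∀ i, e.symm (S, ρ) i ⊆ e.symm (S', ρ) i := by
      intro i
      by_cases hi : i = j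
      · subst hi
        rw [he, Equiv.funSplitAt_symm_apply, Equiv.funSplitAt_symm_apply, dif_pos rfl, dif_pos rfl]
        exact hSS
      · rw [hval i hi]
    have hprod : (∏ i ∈ Finset.univ.erase j, uwt n (Ktype K (τ i)) i (e.symm (S, ρ) i)) =
        ∏ i ∈ Finset.univ.erase j, uwt n (Ktype K (τ i)) i (e.symm (S', ρ) i) :=
      Finset.prod_congr rfl fun i hi => by rw [hval i (Finset.mem_erase.mp hi).1]
    rw [hprod]
    exact mul_le_mul_of_nonneg_right (gInd_mono hsub)
      (Finset.prod_nonneg fun i _ => uwt_nonneg _ _ _ _)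
  simpa [Ktype, hhf] using key_sum_le n K hn hK1 hKn j hf hf0 hfm

lemma Gfun_le_false (n K ℓ r : ℕ) (hn : 2 ≤ n) (hK1 : 1 ≤ K) (hKn : K ≤ n - 1)
    (τ : Fin n → Bool) (j : Fin n) :
    Gfun n K ℓ r τ ≤ Gfun n K ℓ r (Function.update τ j false) := by
  cases h : τ j with
  | false =>
      have : Function.update τ j false = τ := by rw [← h, Function.update_eq_self]
      rw [this]
  | true =>
      have h1 : τ = Function.update τ j true := by rw [← h, Function.update_eq_self]
      calc Gfun n K ℓ r τ = Gfun n K ℓ r (Function.update τ j true) := by rw [← h1]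
        _ ≤ _ := Gfun_update_le n K ℓ r hn hK1 hKn τ j

lemma Gfun_mask (n K ℓ r : ℕ) (hn : 2 ≤ n) (hK1 : 1 ≤ K) (hKn : K ≤ n - 1)
    (A : Finset (Fin n)) (τ : Fin n → Bool) :
    Gfun n K ℓ r τ ≤ Gfun n K ℓ r (fun i => if i ∈ A then false else τ i) := by
  induction A using Finset.induction_on with
  | empty => simp
  | @insert a A ha ih =>
      have key : (fun i => if i ∈ insert a A then false else τ i) =
          Function.update (fun i => if i ∈ A then false else τ i) a false := by
        funext i
        by_cases hi : i = a
        · subst hi; simp [Function.update_self]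
        · rw [Function.update_of_ne hi]
          simp [Finset.mem_insert, hi]
      rw [key]
      exact ih.trans (Gfun_le_false n K ℓ r hn hK1 hKn _ a)

lemma density_eq (n : ℕ) (μ : ℝ) (K : ℕ) (τ : Fin n → Bool) (σ : Fin n → Finset (Fin n)) :
    density n μ K (τ, σ) =
      (∏ i, pwt μ (τ i)) * ∏ i, uwt n (Ktype K (τ i)) i (σ i) := by
  rw [← Finset.prod_mul_distrib]
  rfl

lemma memBC_fst {n ℓ r : ℕ} (τ τ' : Fin n → Bool) (σ : Fin n → Finset (Fin n)) :
    ((τ, σ) : Config n) ∈ eventB n ℓ r ∩ eventC n ℓ r ↔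
      ((τ', σ) : Config n) ∈ eventB n ℓ r ∩ eventC n ℓ r := by
  have h : graph ((τ, σ) : Config n) = graph ((τ', σ) : Config n) := rfl
  simp only [Set.mem_inter_iff, eventB, eventC, Set.mem_setOf_eq, h]

lemma indicator_BC (n ℓ r : ℕ) (μ : ℝ) (K : ℕ) (τ : Fin n → Bool)
    (σ : Fin n → Finset (Fin n)) :
    Set.indicator (eventB n ℓ r ∩ eventC n ℓ r) (density n μ K) (τ, σ) =
      gInd n ℓ r σ * density n μ K (τ, σ) := by
  by_cases h : ((τ, σ) : Config n) ∈ eventB n ℓ r ∩ eventC n ℓ r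
  · rw [Set.indicator_of_mem h, gInd, if_pos ((memBC_fst τ _ σ).mp h), one_mul]
  · rw [Set.indicator_of_notMem h, gInd,
      if_neg (fun hc => h ((memBC_fst _ τ σ).mp hc)), zero_mul]

lemma probE_eq (n ℓ r : ℕ) (μ : ℝ) (K : ℕ) :
    prob n μ K (eventB n ℓ r ∩ eventC n ℓ r) =
      ∑ τ : Fin n → Bool, (∏ i, pwt μ (τ i)) * Gfun n K ℓ r τ := by
  unfold prob
  rw [Fintype.sum_prod_type]
  refine Finset.sum_congr rfl fun τ _ => ?_
  rw [Gfun, Finset.mul_sum]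
  refine Finset.sum_congr rfl fun σ _ => ?_
  rw [indicator_BC, density_eq]
  ring

open Classical in
lemma indicator_BCX (n ℓ r : ℕ) (μ : ℝ) (K : ℕ) (τ : Fin n → Bool)
    (σ : Fin n → Finset (Fin n)) :
    Set.indicator ((eventB n ℓ r ∩ eventC n ℓ r) ∩ eventX n ℓ r false) (density n μ K) (τ, σ) =
      (if (∀ j : Fin n, ℓ ≤ (j : ℕ) → (j : ℕ) < ℓ + r → τ j = false) then 1 else 0) *
        (gInd n ℓ r σ * density n μ K (τ, σ)) := by
  by_cases hX : ∀ j : Fin n, ℓ ≤ (j : ℕ) → (j : ℕ) < ℓ + r → τ j = false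
  · rw [if_pos hX, one_mul, ← indicator_BC]
    have : ((τ, σ) : Config n) ∈ eventX n ℓ r false := hX
    by_cases h : ((τ, σ) : Config n) ∈ eventB n ℓ r ∩ eventC n ℓ r
    · rw [Set.indicator_of_mem (Set.mem_inter h this), Set.indicator_of_mem h]
    · rw [Set.indicator_of_notMem (fun hc => h hc.1), Set.indicator_of_notMem h]
  · rw [if_neg hX, zero_mul,
      Set.indicator_of_notMem (fun hc => hX hc.2)]

open Classical in
lemma probEX_eq (n ℓ r : ℕ) (μ : ℝ) (K : ℕ) :
    prob n μ K ((eventB n ℓ r ∩ eventC n ℓ r) ∩ eventX n ℓ r false) =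
      ∑ τ : Fin n → Bool,
        (if (∀ j : Fin n, ℓ ≤ (j : ℕ) → (j : ℕ) < ℓ + r → τ j = false) then 1 else 0) *
          ((∏ i, pwt μ (τ i)) * Gfun n K ℓ r τ) := by
  unfold prob
  rw [Fintype.sum_prod_type]
  refine Finset.sum_congr rfl fun τ _ => ?_
  rw [Gfun, Finset.mul_sum, Finset.mul_sum]
  refine Finset.sum_congr rfl fun σ _ => ?_
  rw [indicator_BCX, density_eq]
  ring

lemma sum_prod_uwt (n K : ℕ) (hn : 2 ≤ n) (hKn : K ≤ n - 1) (τ : Fin n → Bool) :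
    ∑ σ : Fin n → Finset (Fin n), ∏ i, uwt n (Ktype K (τ i)) i (σ i) = 1 := by
  rw [← Fintype.piFinset_univ, ← Finset.prod_univ_sum]
  refine Finset.prod_eq_one fun i _ => ?_
  apply sum_uwt
  cases τ i <;> simp [Ktype] <;> omega

open Classical in
lemma probX_eq (n ℓ r : ℕ) (μ : ℝ) (K : ℕ) (hn : 2 ≤ n) (hKn : K ≤ n - 1) :
    prob n μ K (eventX n ℓ r false) =
      ∑ τ : Fin n → Bool,
        (if (∀ j : Fin n, ℓ ≤ (j : ℕ) → (j : ℕ) < ℓ + r → τ j = false) then 1 else 0) *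
          ∏ i, pwt μ (τ i) := by
  unfold prob
  rw [Fintype.sum_prod_type]
  refine Finset.sum_congr rfl fun τ _ => ?_
  have hind : ∀ σ : Fin n → Finset (Fin n),
      Set.indicator (eventX n ℓ r false) (density n μ K) (τ, σ) =
        (if (∀ j : Fin n, ℓ ≤ (j : ℕ) → (j : ℕ) < ℓ + r → τ j = false) then 1 else 0) *
          ((∏ i, pwt μ (τ i)) * ∏ i, uwt n (Ktype K (τ i)) i (σ i)) := by
    intro σ
    by_cases hX : ∀ j : Fin n, ℓ ≤ (j : ℕ) → (j : ℕ) < ℓ + r → τ j = false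
    · rw [if_pos hX, one_mul,
        Set.indicator_of_mem (show ((τ, σ) : Config n) ∈ eventX n ℓ r false from hX), density_eq]
    · rw [if_neg hX, zero_mul,
        Set.indicator_of_notMem (show ((τ, σ) : Config n) ∉ eventX n ℓ r false from hX)]
  rw [Finset.sum_congr rfl fun σ _ => hind σ, ← Finset.mul_sum, ← Finset.mul_sum,
    sum_prod_uwt n K hn hKn τ, mul_one]

lemma sum_pwt (μ : ℝ) : ∑ t : Bool, pwt μ t = 1 := by
  rw [Fintype.sum_bool]; simp [pwt]

lemma sum_prod_pwt {ι : Type*} [Fintype ι] [DecidableEq ι] (μ : ℝ) :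
    ∑ a : ι → Bool, ∏ i, pwt μ (a i) = 1 := by
  rw [← Fintype.piFinset_univ, ← Finset.prod_univ_sum]
  exact Finset.prod_eq_one fun i _ => sum_pwt μ

/-- Conditioning on all nodes of `T` being type-2 increases the
probability of `B ∩ C`: `P[B ∩ C] ≤ P[B ∩ C | X_2]`. -/
theorem BC_more_likely_given_type2
    (μ : ℝ) (hμ0 : 0 < μ) (hμ1 : μ < 1)
    (n : ℕ) (hn : 2 ≤ n) (K : ℕ) (hK : 2 ≤ K) (hKn : K < n)
    (ℓ r : ℕ) (hr : 2 ≤ r) (hℓr : ℓ + r ≤ n - 1) :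
    prob n μ K (eventB n ℓ r ∩ eventC n ℓ r) ≤
      cprob n μ K (eventB n ℓ r ∩ eventC n ℓ r) (eventX n ℓ r false) := by
  classical
  have hK1 : 1 ≤ K := by omega
  have hKn' : K ≤ n - 1 := by omega
  have hpwt0 : ∀ t : Bool, 0 ≤ pwt μ t := by
    intro t; cases t <;> simp [pwt] <;> linarith
  set p : Fin n → Prop := fun i => ℓ ≤ (i : ℕ) ∧ (i : ℕ) < ℓ + r with hp
  set pe := Equiv.piEquivPiSubtypeProd p (fun _ => Bool) with hpe
  have hsplit : ∀ F : (Fin n → Bool) → ℝ,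
      ∑ τ : Fin n → Bool, F τ =
        ∑ a : {x // p x} → Bool, ∑ b : {x // ¬ p x} → Bool, F (pe.symm (a, b)) := by
    intro F
    rw [← Equiv.sum_comp pe.symm F, Fintype.sum_prod_type]
  have happ : ∀ (a : {x // p x} → Bool) (b : {x // ¬ p x} → Bool) (i : Fin n),
      pe.symm (a, b) i = if h : p i then a ⟨i, h⟩ else b ⟨i, h⟩ := by
    intro a b i; rw [hpe]; rfl
  have hP : ∀ (a : {x // p x} → Bool) (b : {x // ¬ p x} → Bool),
      (∏ i, pwt μ (pe.symm (a, b) i)) =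
        (∏ i : {x // p x}, pwt μ (a i)) * ∏ i : {x // ¬ p x}, pwt μ (b i) := by
    intro a b
    rw [← Fintype.prod_subtype_mul_prod_subtype p (fun i => pwt μ (pe.symm (a, b) i))]
    congr 1
    · exact Finset.prod_congr rfl fun i _ => by rw [happ, dif_pos i.2]
    · exact Finset.prod_congr rfl fun i _ => by rw [happ, dif_neg i.2]
  have hmask : ∀ τ : Fin n → Bool,
      Gfun n K ℓ r τ ≤ Gfun n K ℓ r (fun i => if p i then false else τ i) := by
    intro τ
    have h1 := Gfun_mask n K ℓ r hn hK1 hKn' (Finset.univ.filter p) τ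
    have hfe : (fun i => if i ∈ Finset.univ.filter p then false else τ i) =
        (fun i => if p i then false else τ i) := by
      funext i; simp [Finset.mem_filter]
    rwa [hfe] at h1
  have hmask2 : ∀ (a : {x // p x} → Bool) (b : {x // ¬ p x} → Bool),
      (fun i => if p i then false else pe.symm (a, b) i) =
        pe.symm (fun _ => false, b) := by
    intro a b; funext i
    by_cases h : p i
    · rw [if_pos h, happ, dif_pos h]
    · rw [if_neg h, happ, happ, dif_neg h, dif_neg h]
  set Sb := ∑ b : {x // ¬ p x} → Bool,
      (∏ i : {x // ¬ p x}, pwt μ (b i)) * Gfun n K ℓ r (pe.symm (fun _ => false, b)) with hSb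
  have ha : prob n μ K (eventB n ℓ r ∩ eventC n ℓ r) ≤ Sb := by
    rw [probE_eq]
    have step : ∑ τ : Fin n → Bool, (∏ i, pwt μ (τ i)) * Gfun n K ℓ r τ ≤
        ∑ τ : Fin n → Bool, (∏ i, pwt μ (τ i)) *
          Gfun n K ℓ r (fun i => if p i then false else τ i) :=
      Finset.sum_le_sum fun τ _ => mul_le_mul_of_nonneg_left (hmask τ)
        (Finset.prod_nonneg fun i _ => hpwt0 _)
    refine step.trans_eq ?_
    rw [hsplit]
    have hterm : ∀ (a : {x // p x} → Bool) (b : {x // ¬ p x} → Bool),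
        (∏ i, pwt μ (pe.symm (a, b) i)) *
            Gfun n K ℓ r (fun i => if p i then false else pe.symm (a, b) i) =
          (∏ i : {x // p x}, pwt μ (a i)) *
            ((∏ i : {x // ¬ p x}, pwt μ (b i)) *
              Gfun n K ℓ r (pe.symm (fun _ => false, b))) := by
      intro a b; rw [hP, hmask2]; ring
    calc ∑ a : {x // p x} → Bool, ∑ b : {x // ¬ p x} → Bool,
          (∏ i, pwt μ (pe.symm (a, b) i)) *
            Gfun n K ℓ r (fun i => if p i then false else pe.symm (a, b) i)
        = ∑ a : {x // p x} → Bool, ∑ b : {x // ¬ p x} → Bool,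
            (∏ i : {x // p x}, pwt μ (a i)) *
              ((∏ i : {x // ¬ p x}, pwt μ (b i)) *
                Gfun n K ℓ r (pe.symm (fun _ => false, b))) :=
          Finset.sum_congr rfl fun a _ => Finset.sum_congr rfl fun b _ => hterm a b
      _ = (∑ a : {x // p x} → Bool, ∏ i : {x // p x}, pwt μ (a i)) * Sb :=
          (Fintype.sum_mul_sum _ _).symm
      _ = Sb := by rw [sum_prod_pwt, one_mul]
  have hXiff : ∀ (a : {x // p x} → Bool) (b : {x // ¬ p x} → Bool),
      (∀ j : Fin n, ℓ ≤ (j : ℕ) → (j : ℕ) < ℓ + r → pe.symm (a, b) j = false) ↔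
        a = fun _ => false := by
    intro a b
    constructor
    · intro h; funext i
      have h2 := h i.1 i.2.1 i.2.2
      rwa [happ, dif_pos i.2] at h2
    · intro h j hj1 hj2
      rw [happ, dif_pos (show p j from ⟨hj1, hj2⟩), h]
  have hb : prob n μ K ((eventB n ℓ r ∩ eventC n ℓ r) ∩ eventX n ℓ r false) =
      (∏ _i : {x // p x}, (1 - μ)) * Sb := by
    rw [probEX_eq, hsplit]
    have h1 : ∀ (a : {x // p x} → Bool), ∑ b : {x // ¬ p x} → Bool,
        (if (∀ j : Fin n, ℓ ≤ (j : ℕ) → (j : ℕ) < ℓ + r → pe.symm (a, b) j = false)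
          then (1:ℝ) else 0) *
          ((∏ i, pwt μ (pe.symm (a, b) i)) * Gfun n K ℓ r (pe.symm (a, b))) =
        if a = (fun _ => false) then
          ∑ b : {x // ¬ p x} → Bool,
            (∏ i, pwt μ (pe.symm (a, b) i)) * Gfun n K ℓ r (pe.symm (a, b)) else 0 := by
      intro a
      by_cases h : a = fun _ => false
      · rw [if_pos h]
        refine Finset.sum_congr rfl fun b _ => ?_
        rw [if_pos ((hXiff a b).mpr h), one_mul]
      · rw [if_neg h]
        refine Finset.sum_eq_zero fun b _ => ?_
        rw [if_neg (fun hc => h ((hXiff a b).mp hc)), zero_mul]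
    rw [Finset.sum_congr rfl fun a _ => h1 a, Finset.sum_ite_eq' Finset.univ (fun _ => false)
      (fun a => ∑ b : {x // ¬ p x} → Bool,
        (∏ i, pwt μ (pe.symm (a, b) i)) * Gfun n K ℓ r (pe.symm (a, b))),
      if_pos (Finset.mem_univ _)]
    rw [hSb, Finset.mul_sum]
    refine Finset.sum_congr rfl fun b _ => ?_
    rw [hP]
    have : (∏ i : {x // p x}, pwt μ ((fun _ => false : {x // p x} → Bool) i)) =
        ∏ _i : {x // p x}, (1 - μ) := rfl
    rw [this]; ring
  have hc : prob n μ K (eventX n ℓ r false) = ∏ _i : {x // p x}, (1 - μ) := by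
    rw [probX_eq n ℓ r μ K hn hKn', hsplit]
    have h1 : ∀ (a : {x // p x} → Bool), ∑ b : {x // ¬ p x} → Bool,
        (if (∀ j : Fin n, ℓ ≤ (j : ℕ) → (j : ℕ) < ℓ + r → pe.symm (a, b) j = false)
          then (1:ℝ) else 0) * (∏ i, pwt μ (pe.symm (a, b) i)) =
        if a = (fun _ => false) then
          ∑ b : {x // ¬ p x} → Bool, (∏ i, pwt μ (pe.symm (a, b) i)) else 0 := by
      intro a
      by_cases h : a = fun _ => false
      · rw [if_pos h]
        refine Finset.sum_congr rfl fun b _ => ?_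
        rw [if_pos ((hXiff a b).mpr h), one_mul]
      · rw [if_neg h]
        refine Finset.sum_eq_zero fun b _ => ?_
        rw [if_neg (fun hc => h ((hXiff a b).mp hc)), zero_mul]
    rw [Finset.sum_congr rfl fun a _ => h1 a, Finset.sum_ite_eq' Finset.univ (fun _ => false)
      (fun a => ∑ b : {x // ¬ p x} → Bool, (∏ i, pwt μ (pe.symm (a, b) i))),
      if_pos (Finset.mem_univ _)]
    have h2 : ∀ b : {x // ¬ p x} → Bool,
        (∏ i, pwt μ (pe.symm ((fun _ => false : {x // p x} → Bool), b) i)) =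
          (∏ _i : {x // p x}, (1 - μ)) * ∏ i : {x // ¬ p x}, pwt μ (b i) := by
      intro b; rw [hP]; rfl
    rw [Finset.sum_congr rfl fun b _ => h2 b, ← Finset.mul_sum, sum_prod_pwt, mul_one]
  have hcX : (0:ℝ) < ∏ _i : {x // p x}, (1 - μ) :=
    Finset.prod_pos fun _ _ => by linarith
  rw [cprob, hb, hc, mul_div_cancel_left₀ _ hcX.ne']
  exact ha

end KOut
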